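/- Let f : X → 𝒢(Z,C) be a convex function and x₀ ∈ dom f. If x₀ solves the set-valued Minty inequality (MVI_M): for all x ∈ X with f(x) ≠ f(x₀), 0⁺f(x) ⊉ f′(x, x₀−x), then x₀ solves the scalarized Minty inequality (mvi_M): for all x ∈ X with f(x) ≠ f(x₀) there exists z* ∈ C⁻∖{0} with φ_{f,z*}(x) ≠ −∞ and φ′_{f,z*}(x, x₀−x) < 0. If additionally the strong regularity condition holds, namely inf{−z*(z) : z ∈ f′(x, x₀−x)} = φ′_{f,z*}(x, x₀−x) for all x ∈ X and all z* ∈ C⁻∖{0}, then x₀ solves (MVI_M) if and only if it solves (mvi_M). -/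

import Mathlib

open Set Pointwise

noncomputable section

variable {Z : Type*} [AddCommGroup Z] [Module ℝ Z] [TopologicalSpace Z]

/-- The inf-residual `A ⊖ B = {z : B + {z} ⊆ A}`. -/
def resid (A B : Set Z) : Set Z := {z : Z | B + {z} ⊆ A}

/-- The recession cone `0⁺A`, with the convention `0⁺∅ = ∅`. -/
def recCone (A : Set Z) : Set Z := {z : Z | A.Nonempty ∧ A + {z} ⊆ A}

/-- `A ⊕ B = cl (A + B)`. -/
def oplus (A B : Set Z) : Set Z := closure (A + B)

/-- Membership in `𝒢(Z,C)`: `A = cl co (A + C)`. -/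
def IsG (C A : Set Z) : Prop := A = closure (convexHull ℝ (A + C))

/-- The set `C⁻ \ {0}` of nonzero elements of the negative dual cone. -/
def negDualNZ (C : Set Z) : Set (Z →L[ℝ] ℝ) :=
  {p : Z →L[ℝ] ℝ | (∀ c ∈ C, p c ≤ 0) ∧ p ≠ 0}

/-- `inf {-z*(z) : z ∈ A}` as an extended real. -/
def scal (p : Z →L[ℝ] ℝ) (A : Set Z) : EReal :=
  sInf ((fun z => ((-(p z) : ℝ) : EReal)) '' A)

/-- Support function `σ(z*|A) = sup {z*(z) : z ∈ A}` as an extended real. -/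
def suppF (p : Z →L[ℝ] ℝ) (A : Set Z) : EReal :=
  sSup ((fun z => ((p z : ℝ) : EReal)) '' A)

/-- Inf-residuation on the extended reals: `r ⊖ s = inf {t ∈ ℝ : r ≤ s + t}`. -/
def eresid (r s : EReal) : EReal :=
  sInf ((fun t : ℝ => (t : EReal)) '' {t : ℝ | r ≤ s + (t : EReal)})

variable {X : Type*} [AddCommGroup X] [Module ℝ X]

/-- The scalarization `φ_{f,z*}(x) = inf {-z*(z) : z ∈ f(x)}`. -/
def phi (f : X → Set Z) (p : Z →L[ℝ] ℝ) (x : X) : EReal := scal p (f x)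

/-- Convexity for set-valued functions:
`f(t x₁ + (1-t) x₂) ⊇ cl (t f(x₁) + (1-t) f(x₂))`. -/
def ConvexSV (f : X → Set Z) : Prop :=
  ∀ x₁ x₂ : X, ∀ t : ℝ, t ∈ Ioo (0:ℝ) 1 →
    closure (t • f x₁ + (1 - t) • f x₂) ⊆ f (t • x₁ + (1 - t) • x₂)

/-- The set-valued directional derivative
`f′(x,u) = ⋂_{t₀>0} cl co ⋃_{0<t<t₀} (1/t)•(f(x+tu) ⊖ f(x))`. -/
def sder (f : X → Set Z) (x u : X) : Set Z :=
  ⋂ t₀ ∈ Ioi (0:ℝ), closure (convexHull ℝ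
    (⋃ t ∈ Ioo (0:ℝ) t₀, (1 / t) • resid (f (x + t • u)) (f x)))

/-- The scalar Dini derivative `φ′_{f,z*}(x,u) = inf_{t>0} (1/t)(φ(x+tu) ⊖ φ(x))`. -/
def phiDer (f : X → Set Z) (p : Z →L[ℝ] ℝ) (x u : X) : EReal :=
  ⨅ t ∈ Ioi (0:ℝ), (((1 / t : ℝ)) : EReal) * eresid (phi f p (x + t • u)) (phi f p x)

end

section Aux

lemma ereal_eq_bot_of_le_all {b : EReal} (h : ∀ r : ℝ, b ≤ (r : EReal)) : b = ⊥ := by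
  induction b using EReal.rec with
  | bot => rfl
  | coe q => exact absurd (EReal.coe_le_coe_iff.1 (h (q - 1))) (by linarith)
  | top => exact absurd (h 0) (by simp)

lemma ereal_le_coe_cases {E : EReal} {c : ℝ} (h : E ≤ (c : EReal)) :
    E = ⊥ ∨ ∃ q : ℝ, E = (q : EReal) ∧ q ≤ c := by
  induction E using EReal.rec with
  | bot => exact Or.inl rfl
  | coe q => exact Or.inr ⟨q, rfl, by exact_mod_cast h⟩
  | top => exact absurd h (by simp)

variable {Z : Type*} [AddCommGroup Z] [Module ℝ Z] [TopologicalSpace Z]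
  [IsTopologicalAddGroup Z] [ContinuousSMul ℝ Z] [LocallyConvexSpace ℝ Z] [T2Space Z]
  {X : Type*} [AddCommGroup X] [Module ℝ X]

/-- The key step: if `sder f x u` is not contained in the recession cone of `f x`,
then there is a separating functional witnessing the scalarized Minty inequality at `x`. -/
lemma key_minty (C : Set Z) (hCcone : ∀ c ∈ C, ∀ r : ℝ, 0 < r → r • c ∈ C)
    (hdual : (negDualNZ C).Nonempty)
    (f : X → Set Z) (hG : ∀ x, IsG C (f x)) (x u : X)
    (h : ¬ (sder f x u ⊆ recCone (f x))) :
    ∃ p ∈ negDualNZ C, phi f p x ≠ ⊥ ∧ phiDer f p x u < 0 := by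
  rcases (f x).eq_empty_or_nonempty with hfx | hfx
  · -- `f x = ∅`: the scalarization is `⊤` and the Dini derivative is `⊥`.
    obtain ⟨p, hp⟩ := hdual
    refine ⟨p, hp, ?_, ?_⟩
    · simp [phi, scal, hfx]
    · have htop : phi f p x = ⊤ := by simp [phi, scal, hfx]
      have h1 : eresid (phi f p (x + (1:ℝ) • u)) (phi f p x) = ⊥ := by
        rw [htop, eresid]
        have hset : {t : ℝ | phi f p (x + (1:ℝ) • u) ≤ ⊤ + (t : EReal)} = univ := by
          ext t; simp [EReal.top_add_coe]
        rw [hset, image_univ]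
        exact ereal_eq_bot_of_le_all fun r => sInf_le ⟨r, rfl⟩
      have hDle : phiDer f p x u ≤
          (((1 / (1:ℝ) : ℝ)) : EReal) * eresid (phi f p (x + (1:ℝ) • u)) (phi f p x) := by
        unfold phiDer
        exact iInf₂_le (1:ℝ) (mem_Ioi.2 one_pos)
      rw [h1] at hDle
      norm_num at hDle
      rw [hDle]
      exact EReal.bot_lt_zero
  · -- `f x ≠ ∅`: separate.
    obtain ⟨zb, hzb_s, hzb_nr⟩ := not_subset.1 h
    have hfx_cc : f x = closure (convexHull ℝ (f x + C)) := hG x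
    have hclosed : IsClosed (f x) := by rw [hfx_cc]; exact isClosed_closure
    have hconv : Convex ℝ (f x) := by rw [hfx_cc]; exact (convex_convexHull ℝ _).closure
    have haddC : ∀ w ∈ f x, ∀ c ∈ C, w + c ∈ f x := by
      intro w hw c hc
      have h1 : w + c ∈ closure (convexHull ℝ (f x + C)) :=
        subset_closure (subset_convexHull ℝ _ (add_mem_add hw hc))
      rwa [← hfx_cc] at h1
    have hnsub : ¬ (f x + {zb} ⊆ f x) := fun hs => hzb_nr ⟨hfx, hs⟩
    obtain ⟨v, hv_mem, hv_not⟩ := not_subset.1 hnsub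
    rw [Set.add_singleton, mem_image] at hv_mem
    obtain ⟨w, hw, rfl⟩ := hv_mem
    obtain ⟨p, u₀, hpa, hpu⟩ := geometric_hahn_banach_closed_point hconv hclosed hv_not
    have hw0 : p w < u₀ := hpa w hw
    have hpzb : 0 < p zb := by
      have h2 : u₀ < p w + p zb := by simpa [map_add] using hpu
      linarith
    have hpC : ∀ c ∈ C, p c ≤ 0 := by
      intro c hc
      by_contra hpc
      push_neg at hpc
      have hr0 : 0 < (u₀ - p w) / p c + 1 := by
        have := div_pos (sub_pos.2 hw0) hpc; linarith
      have hmem : w + ((u₀ - p w) / p c + 1) • c ∈ f x :=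
        haddC w hw _ (hCcone c hc _ hr0)
      have hlt : p w + ((u₀ - p w) / p c + 1) * p c < u₀ := by
        simpa [map_add, map_smul] using hpa _ hmem
      rw [add_mul, div_mul_cancel₀ _ (ne_of_gt hpc), one_mul] at hlt
      linarith
    have hpne : p ≠ 0 := by
      intro h0
      rw [h0] at hpzb
      simp at hpzb
    have hphilb : ((-u₀ : ℝ) : EReal) ≤ phi f p x := by
      refine le_sInf ?_
      rintro e ⟨z, hz, rfl⟩
      exact EReal.coe_le_coe_iff.2 (by linarith [hpa z hz])
    have hphine : phi f p x ≠ ⊥ := by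
      intro hb
      rw [hb] at hphilb
      exact (EReal.bot_lt_coe _).not_ge hphilb
    refine ⟨p, ⟨hpC, hpne⟩, hphine, ?_⟩
    -- extract a point of the difference quotient on which `p` is positive
    have hzb1 : zb ∈ closure (convexHull ℝ
        (⋃ t ∈ Ioo (0:ℝ) 1, (1 / t) • resid (f (x + t • u)) (f x))) := by
      have h1 : zb ∈ sder f x u := hzb_s
      rw [sder] at h1
      exact mem_iInter₂.1 h1 1 (mem_Ioi.2 one_pos)
    have hyex : ∃ y ∈ (⋃ t ∈ Ioo (0:ℝ) 1, (1 / t) • resid (f (x + t • u)) (f x)), 0 < p y := by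
      by_contra hno
      push_neg at hno
      have hsub2 : (⋃ t ∈ Ioo (0:ℝ) 1, (1 / t) • resid (f (x + t • u)) (f x)) ⊆
          {z : Z | p z ≤ 0} := fun y hy => hno y hy
      have hK : zb ∈ {z : Z | p z ≤ 0} :=
        closure_minimal
          (convexHull_min hsub2 (convex_halfSpace_le (p : Z →ₗ[ℝ] ℝ).isLinear 0))
          (isClosed_le p.continuous continuous_const) hzb1
      exact absurd hpzb (not_lt.2 hK)
    obtain ⟨y, hyS, hpy⟩ := hyex
    simp only [mem_iUnion, mem_smul_set, exists_prop] at hyS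
    obtain ⟨t, ht, z, hz, rfl⟩ := hyS
    have ht0 : 0 < t := ht.1
    have hpz : 0 < p z := by
      have h1 : 0 < (1 / t) * p z := by simpa [map_smul] using hpy
      nlinarith [one_div_pos.2 ht0]
    -- `z` translates `f x` into `f (x + t • u)`
    have hmemz : ∀ w' ∈ f x, w' + z ∈ f (x + t • u) := by
      intro w' hw'
      exact hz (by rw [Set.add_singleton]; exact mem_image_of_mem _ hw')
    have hale : ∀ w' ∈ f x, phi f p (x + t • u) ≤ ((-(p w') + -(p z) : ℝ) : EReal) := by
      intro w' hw'
      have he : -(p (w' + z)) = -(p w') + -(p z) := by rw [map_add]; ring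
      exact sInf_le ⟨w' + z, hmemz w' hw', congrArg (fun r : ℝ => (r : EReal)) he⟩
    -- key inequality: `φ(x + t u) ≤ φ(x) + (-(p z))`
    have hab : phi f p (x + t • u) ≤ phi f p x + ((-(p z) : ℝ) : EReal) := by
      rcases ereal_le_coe_cases (hale w hw) with hbot | ⟨q, hq, _⟩
      · rw [hbot]; exact bot_le
      · have hqb : ((q - -(p z) : ℝ) : EReal) ≤ phi f p x := by
          refine le_sInf ?_
          rintro e ⟨w', hw', rfl⟩
          refine EReal.coe_le_coe_iff.2 ?_
          have := EReal.coe_le_coe_iff.1 (hq ▸ hale w' hw')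
          linarith
        calc phi f p (x + t • u) = ((q - -(p z) : ℝ) : EReal) + ((-(p z) : ℝ) : EReal) := by
              rw [hq, ← EReal.coe_add]; norm_num
          _ ≤ phi f p x + ((-(p z) : ℝ) : EReal) := add_le_add_left hqb _
    have heres : eresid (phi f p (x + t • u)) (phi f p x) ≤ ((-(p z) : ℝ) : EReal) :=
      sInf_le ⟨-(p z), hab, rfl⟩
    have hDle : phiDer f p x u ≤
        (((1 / t : ℝ)) : EReal) * eresid (phi f p (x + t • u)) (phi f p x) := by
      unfold phiDer
      exact iInf₂_le t (mem_Ioi.2 ht0)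
    have hprod : (((1 / t : ℝ)) : EReal) * eresid (phi f p (x + t • u)) (phi f p x) < 0 := by
      rcases ereal_le_coe_cases heres with hbot | ⟨q, hq, hqle⟩
      · rw [hbot, EReal.coe_mul_bot_of_pos (by positivity)]
        simp
      · rw [hq, ← EReal.coe_mul]
        have : (1 / t) * q < 0 :=
          mul_neg_of_pos_of_neg (by positivity) (by linarith)
        exact_mod_cast this
    exact lt_of_le_of_lt hDle hprod

end Aux

theorem stmt_16
  {Z : Type*} [AddCommGroup Z] [Module ℝ Z] [TopologicalSpace Z]
  [IsTopologicalAddGroup Z] [ContinuousSMul ℝ Z] [LocallyConvexSpace ℝ Z] [T2Space Z]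
  {X : Type*} [AddCommGroup X] [Module ℝ X]
  (C : Set Z) (hCclosed : IsClosed C) (hCconv : Convex ℝ C)
  (hCcone : ∀ c ∈ C, ∀ r : ℝ, 0 < r → r • c ∈ C) (hC0 : (0:Z) ∈ C)
  (hdual : (negDualNZ C).Nonempty)
  (f : X → Set Z) (hG : ∀ x, IsG C (f x)) (hf : ConvexSV f)
  (x₀ : X) (hx₀ : (f x₀).Nonempty) :
    ((∀ x : X, f x ≠ f x₀ → ¬ (sder f x (x₀ - x) ⊆ recCone (f x))) → (∀ x : X, f x ≠ f x₀ →
      ∃ p ∈ negDualNZ C, phi f p x ≠ ⊥ ∧ phiDer f p x (x₀ - x) < 0))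
    ∧ ((∀ x : X, ∀ p ∈ negDualNZ C, scal p (sder f x (x₀ - x)) = phiDer f p x (x₀ - x)) → ((∀ x : X, f x ≠ f x₀ → ¬ (sder f x (x₀ - x) ⊆ recCone (f x))) ↔ (∀ x : X, f x ≠ f x₀ →
      ∃ p ∈ negDualNZ C, phi f p x ≠ ⊥ ∧ phiDer f p x (x₀ - x) < 0))) := by
  have fwd : (∀ x : X, f x ≠ f x₀ → ¬ (sder f x (x₀ - x) ⊆ recCone (f x))) →
      (∀ x : X, f x ≠ f x₀ →
        ∃ p ∈ negDualNZ C, phi f p x ≠ ⊥ ∧ phiDer f p x (x₀ - x) < 0) := by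
    intro H x hx
    exact key_minty C hCcone hdual f hG x (x₀ - x) (H x hx)
  refine ⟨fwd, fun hreg => ⟨fwd, ?_⟩⟩
  intro Hm x hne hsub
  obtain ⟨p, hpmem, hphine, hder⟩ := Hm x hne
  rw [← hreg x p hpmem] at hder
  rw [scal] at hder
  obtain ⟨e, ⟨z, hzmem, rfl⟩, hlt⟩ := sInf_lt_iff.1 hder
  have hpz : 0 < p z := by
    have hlt' : ((-(p z) : ℝ) : EReal) < 0 := hlt
    have h1 : (-(p z) : ℝ) < 0 := by exact_mod_cast hlt'
    linarith
  obtain ⟨hne', hrec⟩ := hsub hzmem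
  obtain ⟨w, hw⟩ := hne'
  have hmem : ∀ n : ℕ, w + (n : ℝ) • z ∈ f x := by
    intro n
    induction n with
    | zero => simpa using hw
    | succ k ih =>
      have h1 : (w + (k : ℝ) • z) + z ∈ f x :=
        hrec (by rw [Set.add_singleton]; exact mem_image_of_mem _ ih)
      have h2 : w + ((k + 1 : ℕ) : ℝ) • z = (w + (k : ℝ) • z) + z := by
        push_cast
        rw [add_smul, one_smul]
        abel
      rwa [h2]
  have hphile : ∀ n : ℕ, phi f p x ≤ ((-(p w) - n * p z : ℝ) : EReal) := by
    intro n
    have he : -(p (w + (n : ℝ) • z)) = -(p w) - n * p z := by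
      rw [map_add, map_smul, smul_eq_mul]; ring
    exact sInf_le ⟨_, hmem n, congrArg (fun r : ℝ => (r : EReal)) he⟩
  rcases ereal_le_coe_cases (hphile 0) with hbot | ⟨q, hq, _⟩
  · exact hphine hbot
  · obtain ⟨n, hn⟩ := exists_nat_gt ((-(p w) - q) / p z)
    have h1 : q ≤ -(p w) - n * p z := EReal.coe_le_coe_iff.1 (hq ▸ hphile n)
    have h2 : (-(p w) - q) / p z < n := hn
    rw [div_lt_iff₀ hpz] at h2
    linarith
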